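/- Let φ be an automorphism of a finite group G of order coprime to |G|. Then [[G,φ],φ] = [G,φ], where [G,φ] is the subgroup generated by all g⁻¹·φ(g). -/

import Mathlib

/-- Let `φ` be an automorphism of a finite group `G` of order coprime to `|G|`.
Then `[[G,φ],φ] = [G,φ]`, where `[G,φ] = ⟨g⁻¹ φ(g) : g ∈ G⟩` and `[[G,φ],φ]` is the
subgroup generated by the commutators `g⁻¹ φ(g)` with `g ∈ [G,φ]`. -/
theorem coprime_aut_commutator_subgroup_idem
    {G : Type*} [Group G] [Finite G]
    (φ : MulAut G) (hcop : Nat.Coprime (orderOf φ) (Nat.card G)) :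
    Subgroup.closure {x : G | ∃ g ∈ Subgroup.closure {y : G | ∃ h : G, y = h⁻¹ * φ h},
        x = g⁻¹ * φ g}
      = Subgroup.closure {y : G | ∃ h : G, y = h⁻¹ * φ h} := by
  set S : Set G := {y : G | ∃ h : G, y = h⁻¹ * φ h} with hS
  set N : Subgroup G := Subgroup.closure S with hN
  set T : Set G := {x : G | ∃ g ∈ N, x = g⁻¹ * φ g} with hT
  set M : Subgroup G := Subgroup.closure T with hM
  -- N is φ-invariant
  have hNinv : ∀ g ∈ N, φ g ∈ N := by
    have : N.map φ.toMonoidHom ≤ N := by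
      rw [hN, MonoidHom.map_closure]
      refine (Subgroup.closure_le _).mpr ?_
      rintro x ⟨y, ⟨h, rfl⟩, rfl⟩
      exact Subgroup.subset_closure ⟨φ h, by simp⟩
    intro g hg
    exact this ⟨g, hg, rfl⟩
  -- M ≤ N
  have hTN : T ⊆ (N : Set G) := by
    rintro x ⟨g, hg, rfl⟩
    exact mul_mem (inv_mem hg) (hNinv g hg)
  have hMN : M ≤ N := (Subgroup.closure_le _).mpr hTN
  -- M is φ-invariant
  have hMinv : ∀ m ∈ M, φ m ∈ M := by
    have : M.map φ.toMonoidHom ≤ M := by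
      rw [hM, MonoidHom.map_closure]
      refine (Subgroup.closure_le _).mpr ?_
      rintro x ⟨y, ⟨g, hg, rfl⟩, rfl⟩
      exact Subgroup.subset_closure ⟨φ g, hNinv g hg, by simp⟩
    intro m hm
    exact this ⟨m, hm, rfl⟩
  -- M is normalized by N
  have hconj : ∀ n ∈ N, ∀ m ∈ M, n⁻¹ * m * n ∈ M := by
    intro n hn
    have : M.map (MulAut.conj n⁻¹).toMonoidHom ≤ M := by
      rw [hM, MonoidHom.map_closure]
      refine (Subgroup.closure_le _).mpr ?_
      rintro x ⟨y, ⟨g, hg, rfl⟩, rfl⟩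
      have h1 : (g * n)⁻¹ * φ (g * n) ∈ M :=
        Subgroup.subset_closure ⟨g * n, mul_mem hg hn, rfl⟩
      have h2 : (n⁻¹ * φ n) ∈ M := Subgroup.subset_closure ⟨n, hn, rfl⟩
      have heq : (MulAut.conj n⁻¹).toMonoidHom (g⁻¹ * φ g)
          = ((g * n)⁻¹ * φ (g * n)) * (n⁻¹ * φ n)⁻¹ := by
        simp [MulAut.conj_apply, mul_assoc]
      rw [heq]
      exact mul_mem h1 (inv_mem h2)
    intro m hm
    have := this ⟨m, hm, rfl⟩
    simpa [MulAut.conj_apply, mul_assoc] using this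
  -- the key claim: every generator of N lies in M
  have key : ∀ g : G, g⁻¹ * φ g ∈ M := by
    intro g
    set k : G := g⁻¹ * φ g with hk
    have hkN : k ∈ N := Subgroup.subset_closure ⟨g, rfl⟩
    set m₁ : G := k⁻¹ * φ k with hm₁
    have hm₁M : m₁ ∈ M := Subgroup.subset_closure ⟨k, hkN, rfl⟩
    have hpow : ∀ j : ℕ, ∃ m ∈ M, (k * m₁) ^ j = k ^ j * m := by
      intro j
      induction j with
      | zero => exact ⟨1, one_mem M, by simp⟩
      | succ j ih =>
        obtain ⟨m, hm, hme⟩ := ih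
        refine ⟨(k⁻¹ * m * k) * m₁, mul_mem (hconj k hkN m hm) hm₁M, ?_⟩
        rw [pow_succ, hme, pow_succ]
        group
    have hmain : ∀ j : ℕ, ∃ m ∈ M, (φ ^ j) g = g * k ^ j * m := by
      intro j
      induction j with
      | zero => exact ⟨1, one_mem M, by simp⟩
      | succ j ih =>
        obtain ⟨m, hm, hme⟩ := ih
        obtain ⟨m', hm', hme'⟩ := hpow j
        refine ⟨m' * φ m, mul_mem hm' (hMinv m hm), ?_⟩
        have : (φ ^ (j + 1)) g = φ ((φ ^ j) g) := by
          rw [pow_succ']; rfl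
        rw [this, hme]
        have hφk : φ k = k * m₁ := by rw [hm₁]; group
        calc φ (g * k ^ j * m) = φ g * (φ k) ^ j * φ m := by simp [map_mul]
          _ = (g * k) * (k * m₁) ^ j * φ m := by
              rw [hφk, hk]; group
          _ = (g * k) * (k ^ j * m') * φ m := by rw [hme']
          _ = g * k ^ (j + 1) * (m' * φ m) := by rw [pow_succ]; group
    obtain ⟨m, hm, hme⟩ := hmain (orderOf φ)
    have h1 : (φ ^ orderOf φ) g = g := by rw [pow_orderOf_eq_one]; rfl
    have hknM : k ^ orderOf φ ∈ M := by
      have : k ^ orderOf φ * m = 1 := by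
        have := hme.symm.trans h1
        calc k ^ orderOf φ * m = g⁻¹ * (g * k ^ orderOf φ * m) := by group
          _ = 1 := by rw [this]; group
      have h2 : k ^ orderOf φ = m⁻¹ := eq_inv_iff_mul_eq_one.mpr this
      rw [h2]; exact inv_mem hm
    -- coprimality finish
    have hd : orderOf k ∣ Nat.card G := orderOf_dvd_natCard k
    have hcop' : Nat.Coprime (orderOf φ) (orderOf k) :=
      Nat.Coprime.coprime_dvd_right hd hcop
    have hdpos : 0 < orderOf k := orderOf_pos k
    rcases Nat.lt_or_ge 1 (orderOf k) with hd1 | hd1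
    · obtain ⟨b, -, hb⟩ := Nat.exists_mul_mod_eq_one_of_coprime hcop' hd1
      have : k = (k ^ orderOf φ) ^ b := by
        rw [← pow_mul, ← pow_mod_orderOf, hb, pow_one]
      rw [this]
      exact pow_mem hknM b
    · have : orderOf k = 1 := le_antisymm hd1 hdpos
      have : k = 1 := orderOf_eq_one_iff.mp this
      rw [this]; exact one_mem M
  refine le_antisymm hMN ?_
  refine (Subgroup.closure_le _).mpr ?_
  rintro y ⟨h, rfl⟩
  exact key h
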